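/- Let n ≥ 1, let α > 0 and c > 0, and let Q be an n×n real symmetric stochastic matrix satisfying: (i) Q(x,x) ≥ α for every x; (ii) the graph on the index set with an edge between x ≠ y whenever Q(x,y) > 0 is connected; (iii) c ≤ Q(x,y)/n for every x ≠ y with Q(x,y) > 0. Then for every index x and every integer k ≥ 1, |n·(Q^k)(x,x) − 1| ≤ min{ 1/(αc·√(k+1)), 1/(2α²c²(k+1)) }, where Q^k denotes the k-th matrix power and (Q^k)(x,x) its diagonal entry at x. -/

import Mathlib

open Finset Matrix

namespace Stmt12

variable {n : ℕ} {α c : ℝ} {Q : Matrix (Fin n) (Fin n) ℝ}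

/-- bundled hypotheses -/
structure Hyp (n : ℕ) (α c : ℝ) (Q : Matrix (Fin n) (Fin n) ℝ) : Prop where
  hn2 : 2 ≤ n
  hα : 0 < α
  hc : 0 < c
  symm : ∀ x y, Q x y = Q y x
  nn : ∀ x y, 0 ≤ Q x y
  row : ∀ x, ∑ y, Q x y = 1
  diag : ∀ x, α ≤ Q x x
  edge : ∀ x y, x ≠ y → 0 < Q x y → c * n ≤ Q x y
  conn : (SimpleGraph.fromRel fun x y => 0 < Q x y).Connected
  cn1 : c * n ≤ 1 - α

namespace Hyp

theorem hn0 (h : Hyp n α c Q) : (0:ℝ) < n := by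
  have := h.hn2; positivity

theorem acn (h : Hyp n α c Q) : 4 * (α * (c * n)) ≤ 1 := by
  have h1 : α * (c * n) ≤ α * (1 - α) := by
    have := h.cn1; nlinarith [h.hα.le]
  nlinarith [sq_nonneg (2*α - 1)]

theorem acn' (h : Hyp n α c Q) : 2 * α * c * ((n:ℝ) - 1) ≤ 1 := by
  have h1 : α * (c * n) ≤ 1/4 := by nlinarith [h.acn]
  have h2 : 2 * α * c * ((n:ℝ) - 1) ≤ 2 * α * c * n := by
    have hα := h.hα; have hc := h.hc
    have : (0:ℝ) ≤ 2 * α * c := by positivity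
    nlinarith [h.hα, h.hc]
  nlinarith

end Hyp

def nsq (g : Fin n → ℝ) : ℝ := ∑ x, (g x)^2

def dp (u v : Fin n → ℝ) : ℝ := ∑ x, u x * v x

theorem nsq_nonneg (g : Fin n → ℝ) : 0 ≤ nsq g :=
  Finset.sum_nonneg fun _ _ => sq_nonneg _

theorem nsq_eq_dp (g : Fin n → ℝ) : nsq g = dp g g := by
  unfold nsq dp; apply Finset.sum_congr rfl; intro x _; ring

theorem pow_nn (h : Hyp n α c Q) (m : ℕ) : ∀ x y, 0 ≤ (Q ^ m) x y := by
  induction m with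
  | zero => intro x y; simp [Matrix.one_apply]; split <;> norm_num
  | succ m ih =>
    intro x y
    rw [pow_succ, Matrix.mul_apply]
    exact Finset.sum_nonneg fun w _ => mul_nonneg (ih x w) (h.nn w y)

theorem pow_row (hr : ∀ x, ∑ y, Q x y = 1) (m : ℕ) : ∀ x, ∑ y, (Q ^ m) x y = 1 := by
  induction m with
  | zero => intro x; simp [Matrix.one_apply]
  | succ m ih =>
    intro x
    simp only [pow_succ, Matrix.mul_apply]
    rw [Finset.sum_comm]
    have : ∀ w, ∑ y, (Q ^ m) x w * Q w y = (Q ^ m) x w := by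
      intro w; rw [← Finset.mul_sum, hr w, mul_one]
    rw [Finset.sum_congr rfl fun w _ => this w, ih x]

theorem sum_mulVec (h : Hyp n α c Q) (g : Fin n → ℝ) :
    ∑ x, (Q *ᵥ g) x = ∑ x, g x := by
  simp only [Matrix.mulVec, dotProduct]
  rw [Finset.sum_comm]
  apply Finset.sum_congr rfl
  intro y _
  have : ∀ x, Q x y = Q y x := fun x => h.symm x y
  rw [Finset.sum_congr rfl fun x _ => by rw [this x], ← Finset.sum_mul, h.row y, one_mul]

theorem sum_pow_mulVec (h : Hyp n α c Q) (m : ℕ) (g : Fin n → ℝ) :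
    ∑ x, ((Q ^ m) *ᵥ g) x = ∑ x, g x := by
  induction m with
  | zero => simp
  | succ m ih =>
    have e : (Q ^ (m+1)) *ᵥ g = Q *ᵥ ((Q ^ m) *ᵥ g) := by
      rw [Matrix.mulVec_mulVec, ← pow_succ']
    rw [e, sum_mulVec h, ih]

theorem dp_mulVec_comm (h : Hyp n α c Q) (u v : Fin n → ℝ) :
    dp (Q *ᵥ u) v = dp u (Q *ᵥ v) := by
  unfold dp
  simp only [Matrix.mulVec, dotProduct, Finset.sum_mul, Finset.mul_sum]
  rw [Finset.sum_comm]
  apply Finset.sum_congr rfl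
  intro y _
  apply Finset.sum_congr rfl
  intro x _
  rw [h.symm x y]; ring

theorem dp_pow_mulVec_comm (h : Hyp n α c Q) (m : ℕ) :
    ∀ u v : Fin n → ℝ, dp ((Q ^ m) *ᵥ u) v = dp u ((Q ^ m) *ᵥ v) := by
  induction m with
  | zero => intro u v; simp
  | succ m ih =>
    intro u v
    have e1 : (Q ^ (m+1)) *ᵥ u = (Q ^ m) *ᵥ (Q *ᵥ u) := by
      rw [Matrix.mulVec_mulVec, ← pow_succ]
    have e2 : (Q ^ (m+1)) *ᵥ v = Q *ᵥ ((Q ^ m) *ᵥ v) := by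
      rw [Matrix.mulVec_mulVec, ← pow_succ']
    rw [e1, ih (Q *ᵥ u) v, dp_mulVec_comm h, e2]

theorem nsq_mulVec_le (h : Hyp n α c Q) (g : Fin n → ℝ) :
    nsq (Q *ᵥ g) ≤ nsq g := by
  have key : ∀ x, ((Q *ᵥ g) x)^2 ≤ ∑ y, Q x y * (g y)^2 := by
    intro x
    have cs := Finset.sum_mul_sq_le_sq_mul_sq Finset.univ
      (fun y => Real.sqrt (Q x y)) (fun y => Real.sqrt (Q x y) * g y)
    have e1 : ∀ y, Real.sqrt (Q x y) * (Real.sqrt (Q x y) * g y) = Q x y * g y := by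
      intro y; rw [← mul_assoc, Real.mul_self_sqrt (h.nn x y)]
    have e2 : ∀ y, (Real.sqrt (Q x y))^2 = Q x y := fun y => Real.sq_sqrt (h.nn x y)
    have e3 : ∀ y, (Real.sqrt (Q x y) * g y)^2 = Q x y * (g y)^2 := by
      intro y; rw [mul_pow, e2 y]
    rw [Finset.sum_congr rfl fun y _ => e1 y, Finset.sum_congr rfl fun y _ => e2 y,
      Finset.sum_congr rfl fun y _ => e3 y, h.row x, one_mul] at cs
    simpa [Matrix.mulVec, dotProduct] using cs
  calc nsq (Q *ᵥ g) ≤ ∑ x, ∑ y, Q x y * (g y)^2 :=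
        Finset.sum_le_sum fun x _ => key x
    _ = nsq g := by
        rw [Finset.sum_comm]
        apply Finset.sum_congr rfl
        intro y _
        rw [Finset.sum_congr rfl fun x _ => by rw [h.symm x y], ← Finset.sum_mul, h.row y, one_mul]

theorem nsq_pow_mulVec_le (h : Hyp n α c Q) (m : ℕ) (g : Fin n → ℝ) :
    nsq ((Q ^ m) *ᵥ g) ≤ nsq g := by
  induction m with
  | zero => simp
  | succ m ih =>
    have e : (Q ^ (m+1)) *ᵥ g = Q *ᵥ ((Q ^ m) *ᵥ g) := by
      rw [Matrix.mulVec_mulVec, ← pow_succ']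
    rw [e]
    exact le_trans (nsq_mulVec_le h _) ih

/-- existence of an injective chain of Q-edges between any two vertices -/
theorem exists_chain (hconn : (SimpleGraph.fromRel fun x y => 0 < Q x y).Connected)
    (hsym : ∀ x y, Q x y = Q y x) (u v : Fin n) :
    ∃ (m : ℕ) (p : ℕ → Fin n), p 0 = u ∧ p m = v ∧ m + 1 ≤ n ∧
      (∀ i j, i ≤ m → j ≤ m → p i = p j → i = j) ∧
      (∀ i, i < m → p i ≠ p (i+1) ∧ 0 < Q (p i) (p (i+1))) := by
  classical
  set G := SimpleGraph.fromRel fun x y => 0 < Q x y with hG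
  obtain ⟨W⟩ := hconn.preconnected u v
  set P := W.bypass with hPdef
  have hP : P.IsPath := W.bypass_isPath
  set l := P.support with hl
  have hnd : l.Nodup := hP.support_nodup
  have hch : List.Chain' G.Adj l := P.isChain_adj_support
  have hlen : l.length = P.length + 1 := P.length_support
  refine ⟨P.length, fun i => l.getD i u, ?_, ?_, ?_, ?_, ?_⟩
  · have h0 : 0 < l.length := by omega
    show l.getD 0 u = u
    rw [List.getD_eq_getElem l u h0]
    have := P.head_support
    rwa [List.head_eq_getElem] at this
  · have hm : P.length < l.length := by omega
    show l.getD P.length u = v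
    rw [List.getD_eq_getElem l u hm]
    have := P.getLast_support
    rw [List.getLast_eq_getElem] at this
    simp only [← hl, hlen, Nat.add_sub_cancel] at this; exact this
  · have := hnd.length_le_card
    simpa [hlen, Fintype.card_fin] using this
  · intro i j hi hj hij
    have hi' : i < l.length := by omega
    have hj' : j < l.length := by omega
    simp only [List.getD_eq_getElem l u hi', List.getD_eq_getElem l u hj'] at hij
    exact (hnd.getElem_inj_iff).mp hij
  · intro i hi
    have hi1 : i + 1 < l.length := by omega
    have hadj := List.isChain_iff_getElem.mp hch i hi1
    have hi' : i < l.length := by omega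
    have hi2 : i + 1 < l.length := by omega
    show l.getD i u ≠ l.getD (i+1) u ∧ 0 < Q (l.getD i u) (l.getD (i+1) u)
    rw [List.getD_eq_getElem l u hi', List.getD_eq_getElem l u hi2]
    rw [SimpleGraph.fromRel_adj] at hadj
    refine ⟨hadj.1, ?_⟩
    rcases hadj.2 with h1 | h1
    · exact h1
    · rwa [hsym]

/-- column sums -/
theorem col_sum (h : Hyp n α c Q) (y : Fin n) : ∑ x, Q x y = 1 := by
  rw [Finset.sum_congr rfl fun x _ => h.symm x y, h.row y]

/-- energy identity -/
theorem energy (h : Hyp n α c Q) (g : Fin n → ℝ) :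
    2 * (nsq g - nsq (Q *ᵥ g)) = ∑ x, ∑ y, (Q * Q) x y * (g x - g y)^2 := by
  set R := Q * Q with hR
  have hRrow : ∀ x, ∑ y, R x y = 1 := by
    intro x
    simp only [hR, Matrix.mul_apply]
    rw [Finset.sum_comm]
    have : ∀ w, ∑ y, Q x w * Q w y = Q x w := by
      intro w; rw [← Finset.mul_sum, h.row w, mul_one]
    rw [Finset.sum_congr rfl fun w _ => this w, h.row x]
  have hRcol : ∀ y, ∑ x, R x y = 1 := by
    intro y
    simp only [hR, Matrix.mul_apply]
    rw [Finset.sum_comm]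
    have : ∀ w, ∑ x, Q x w * Q w y = Q w y := by
      intro w; rw [← Finset.sum_mul, col_sum h w, one_mul]
    rw [Finset.sum_congr rfl fun w _ => this w, col_sum h y]
  have hmid : ∑ x, ∑ y, R x y * (g x * g y) = nsq (Q *ᵥ g) := by
    have e1 : nsq (Q *ᵥ g) = dp g (R *ᵥ g) := by
      rw [nsq_eq_dp, dp_mulVec_comm h g (Q *ᵥ g)]
      have : Q *ᵥ (Q *ᵥ g) = R *ᵥ g := by rw [Matrix.mulVec_mulVec]
      rw [← this]
    rw [e1]
    unfold dp
    simp only [Matrix.mulVec, dotProduct, Finset.mul_sum]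
    apply Finset.sum_congr rfl
    intro x _
    apply Finset.sum_congr rfl
    intro y _; ring
  have key : ∀ x, ∑ y, R x y * (g x - g y)^2
      = (g x)^2 + ((∑ y, R x y * (g y)^2) - 2 * (∑ y, R x y * (g x * g y))) := by
    intro x
    have e : ∀ y, R x y * (g x - g y)^2
        = R x y * (g x)^2 + (R x y * (g y)^2 - 2 * (R x y * (g x * g y))) := by
      intro y; ring
    rw [Finset.sum_congr rfl fun y _ => e y, Finset.sum_add_distrib, Finset.sum_sub_distrib,
      ← Finset.sum_mul, hRrow x, one_mul, ← Finset.mul_sum]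
  rw [Finset.sum_congr rfl fun x _ => key x, Finset.sum_add_distrib, Finset.sum_sub_distrib,
    ← Finset.mul_sum]
  have e2 : ∑ x, ∑ y, R x y * (g y)^2 = nsq g := by
    rw [Finset.sum_comm]
    unfold nsq
    apply Finset.sum_congr rfl
    intro y _
    rw [← Finset.sum_mul, hRcol y, one_mul]
  rw [e2, hmid]
  unfold nsq
  ring

theorem pathbound (h : Hyp n α c Q) (g : Fin n → ℝ) (p : ℕ → Fin n) (m : ℕ)
    (hinj : ∀ i j, i ≤ m → j ≤ m → p i = p j → i = j)
    (hadj : ∀ i, i < m → p i ≠ p (i+1) ∧ 0 < Q (p i) (p (i+1))) :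
    2*α*(c*n) * (∑ i ∈ Finset.range m, (g (p i) - g (p (i+1)))^2)
      ≤ nsq g - nsq (Q *ᵥ g) := by
  classical
  set R := Q * Q with hR
  have hRnn : ∀ u v, 0 ≤ R u v := by
    intro u v
    simp only [hR, Matrix.mul_apply]
    exact Finset.sum_nonneg fun w _ => mul_nonneg (h.nn u w) (h.nn w v)
  have hRedge : ∀ u v, u ≠ v → 0 < Q u v → 2*α*(c*n) ≤ R u v := by
    intro u v huv hQ
    have hcn : c * n ≤ Q u v := h.edge u v huv hQ
    have hcn0 : (0:ℝ) ≤ c * n := by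
      have := h.hc; have := h.hn0; positivity
    have hα0 : (0:ℝ) ≤ α := h.hα.le
    have t1 : α * (c * n) ≤ Q u u * Q u v :=
      mul_le_mul (h.diag u) hcn hcn0 (h.nn u u)
    have t2 : α * (c * n) ≤ Q u v * Q v v := by
      have := mul_le_mul (h.diag v) hcn hcn0 (h.nn v v)
      nlinarith
    have hpair : Q u u * Q u v + Q u v * Q v v ≤ R u v := by
      have hsub : ({u, v} : Finset (Fin n)) ⊆ Finset.univ := Finset.subset_univ _
      have := Finset.sum_le_sum_of_subset_of_nonneg hsub
        (fun w _ _ => mul_nonneg (h.nn u w) (h.nn w v))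
      rw [Finset.sum_pair huv] at this
      simpa [hR, Matrix.mul_apply] using this
    nlinarith
  set T : Fin n × Fin n → ℝ := fun q => R q.1 q.2 * (g q.1 - g q.2)^2 with hT
  have hTnn : ∀ q, 0 ≤ T q := fun q => mul_nonneg (hRnn _ _) (sq_nonneg _)
  have hsum : ∑ q ∈ Finset.univ ×ˢ Finset.univ, T q = 2 * (nsq g - nsq (Q *ᵥ g)) := by
    rw [Finset.sum_product, energy h g]
  set P1 := (Finset.range m).image (fun i => (p i, p (i+1))) with hP1def
  set P2 := (Finset.range m).image (fun i => (p (i+1), p i)) with hP2def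
  have inj1 : Set.InjOn (fun i => (p i, p (i+1))) (Finset.range m) := by
    intro i hi j hj hij
    simp only [Finset.coe_range, Set.mem_Iio] at hi hj
    have := congrArg Prod.fst hij
    exact hinj i j (by omega) (by omega) this
  have inj2 : Set.InjOn (fun i => (p (i+1), p i)) (Finset.range m) := by
    intro i hi j hj hij
    simp only [Finset.coe_range, Set.mem_Iio] at hi hj
    have := congrArg Prod.snd hij
    exact hinj i j (by omega) (by omega) this
  have hsum1 : ∑ q ∈ P1, T q = ∑ i ∈ Finset.range m, T (p i, p (i+1)) :=
    Finset.sum_image (fun i hi j hj hij => inj1 (by simpa using hi) (by simpa using hj) hij)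
  have hsum2 : ∑ q ∈ P2, T q = ∑ i ∈ Finset.range m, T (p (i+1), p i) :=
    Finset.sum_image (fun i hi j hj hij => inj2 (by simpa using hi) (by simpa using hj) hij)
  have hdisj : Disjoint P1 P2 := by
    rw [Finset.disjoint_left]
    rintro q hq1 hq2
    obtain ⟨i, hi, hqi⟩ := Finset.mem_image.mp hq1
    obtain ⟨j, hj, hqj⟩ := Finset.mem_image.mp hq2
    rw [Finset.mem_range] at hi hj
    rw [← hqj] at hqi
    have e1 : p i = p (j+1) := congrArg Prod.fst hqi
    have e2 : p (i+1) = p j := congrArg Prod.snd hqi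
    have t1 : i = j + 1 := hinj i (j+1) (by omega) (by omega) e1
    have t2 : i + 1 = j := hinj (i+1) j (by omega) (by omega) e2
    omega
  have hle : ∑ q ∈ P1 ∪ P2, T q ≤ 2 * (nsq g - nsq (Q *ᵥ g)) := by
    rw [← hsum]
    apply Finset.sum_le_sum_of_subset_of_nonneg (Finset.subset_univ _)
    intro q _ _
    exact hTnn q
  rw [Finset.sum_union hdisj, hsum1, hsum2] at hle
  have hterm1 : ∀ i ∈ Finset.range m,
      2*α*(c*n) * (g (p i) - g (p (i+1)))^2 ≤ T (p i, p (i+1)) := by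
    intro i hi
    rw [Finset.mem_range] at hi
    obtain ⟨hne, hQ⟩ := hadj i hi
    exact mul_le_mul_of_nonneg_right (hRedge _ _ hne hQ) (sq_nonneg _)
  have hterm2 : ∀ i ∈ Finset.range m,
      2*α*(c*n) * (g (p i) - g (p (i+1)))^2 ≤ T (p (i+1), p i) := by
    intro i hi
    rw [Finset.mem_range] at hi
    obtain ⟨hne, hQ⟩ := hadj i hi
    have hQ' : 0 < Q (p (i+1)) (p i) := by rwa [h.symm] at hQ
    have e : T (p (i+1), p i) = R (p (i+1)) (p i) * (g (p i) - g (p (i+1)))^2 := by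
      simp only [hT]; ring
    rw [e]
    exact mul_le_mul_of_nonneg_right (hRedge _ _ (Ne.symm hne) hQ') (sq_nonneg _)
  have hs1 := Finset.sum_le_sum hterm1
  have hs2 := Finset.sum_le_sum hterm2
  rw [← Finset.mul_sum] at hs1 hs2
  linarith

theorem phi_diff (s t : ℝ) : s * |s| - t * |t| ≤ |s - t| * (|s| + |t|) := by
  have h1 : s * |s| - t * |t| = (s - t) * |s| + t * (|s| - |t|) := by ring
  have h2 : (s - t) * |s| ≤ |s - t| * |s| :=
    mul_le_mul_of_nonneg_right (le_abs_self _) (abs_nonneg _)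
  have h3 : t * (|s| - |t|) ≤ |t| * |s - t| := by
    calc t * (|s| - |t|) ≤ |t * (|s| - |t|)| := le_abs_self _
      _ = |t| * abs (|s| - |t|) := abs_mul _ _
      _ ≤ |t| * |s - t| :=
          mul_le_mul_of_nonneg_left (abs_abs_sub_abs_le_abs_sub _ _) (abs_nonneg t)
  nlinarith [abs_nonneg (s - t), abs_nonneg s, abs_nonneg t]

theorem K1 (h : Hyp n α c Q) (g : Fin n → ℝ) (hg : ∑ x, g x = 0) (m : ℕ) (z : Fin n) :
    4*α^2*c^2*(n:ℝ) * (((Q^m) *ᵥ g) z)^2 ≤ nsq g - nsq (Q *ᵥ g) := by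
  have hne : (Finset.univ : Finset (Fin n)).Nonempty := ⟨z, Finset.mem_univ z⟩
  obtain ⟨w, -, hw⟩ := Finset.exists_max_image Finset.univ g hne
  obtain ⟨y, -, hy⟩ := Finset.exists_min_image Finset.univ g hne
  have hnR : (0:ℝ) < n := h.hn0
  have hw0 : 0 ≤ g w := by
    have h1 : ∑ x, g x ≤ Finset.univ.card • g w :=
      Finset.sum_le_card_nsmul Finset.univ g (g w) (fun x _ => hw x (Finset.mem_univ x))
    rw [hg, Finset.card_univ, Fintype.card_fin, nsmul_eq_mul] at h1
    nlinarith
  have hy0 : g y ≤ 0 := by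
    have h1 : Finset.univ.card • g y ≤ ∑ x, g x :=
      Finset.card_nsmul_le_sum Finset.univ g (g y) (fun x _ => hy x (Finset.mem_univ x))
    rw [hg, Finset.card_univ, Fintype.card_fin, nsmul_eq_mul] at h1
    nlinarith
  set v := ((Q^m) *ᵥ g) z with hv
  have hvU : v ≤ g w := by
    have h1 : ∀ t, (Q^m) z t * g t ≤ (Q^m) z t * g w := fun t =>
      mul_le_mul_of_nonneg_left (hw t (Finset.mem_univ t)) (pow_nn h m z t)
    calc v = ∑ t, (Q^m) z t * g t := rfl
      _ ≤ ∑ t, (Q^m) z t * g w := Finset.sum_le_sum fun t _ => h1 t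
      _ = g w := by rw [← Finset.sum_mul, pow_row h.row m z, one_mul]
  have hvL : g y ≤ v := by
    have h1 : ∀ t, (Q^m) z t * g y ≤ (Q^m) z t * g t := fun t =>
      mul_le_mul_of_nonneg_left (hy t (Finset.mem_univ t)) (pow_nn h m z t)
    calc g y = ∑ t, (Q^m) z t * g y := by rw [← Finset.sum_mul, pow_row h.row m z, one_mul]
      _ ≤ ∑ t, (Q^m) z t * g t := Finset.sum_le_sum fun t _ => h1 t
      _ = v := rfl
  have hv2 : v^2 ≤ (g w - g y)^2 := by
    apply sq_le_sq'
    · linarith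
    · linarith
  obtain ⟨m', p, hp0, hpm, hmn, hinj, hadj⟩ := exists_chain h.conn h.symm w y
  set S := ∑ i ∈ Finset.range m', (g (p i) - g (p (i+1)))^2 with hS
  have hS0 : 0 ≤ S := Finset.sum_nonneg fun i _ => sq_nonneg _
  have htel : ∑ i ∈ Finset.range m', (g (p i) - g (p (i+1))) = g w - g y := by
    have := Finset.sum_range_sub' (fun i => g (p i)) m'
    rw [this, hp0, hpm]
  have hCS : (g w - g y)^2 ≤ (m' : ℝ) * S := by
    have := Finset.sum_mul_sq_le_sq_mul_sq (Finset.range m')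
      (fun i => g (p i) - g (p (i+1))) (fun _ => (1:ℝ))
    simp only [mul_one, one_pow] at this
    rw [htel] at this
    rw [Finset.sum_const, Finset.card_range, nsmul_eq_mul, mul_one] at this
    calc (g w - g y)^2 ≤ S * (m':ℝ) := this
      _ = (m':ℝ) * S := by ring
  have hm'le : (m' : ℝ) ≤ (n : ℝ) - 1 := by
    have : (m' : ℝ) + 1 ≤ (n : ℝ) := by exact_mod_cast hmn
    linarith
  have hPB := pathbound h g p m' hinj hadj
  rw [← hS] at hPB
  have q1 : v^2 ≤ ((n:ℝ)-1) * S := by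
    have : (m':ℝ) * S ≤ ((n:ℝ)-1) * S := mul_le_mul_of_nonneg_right hm'le hS0
    linarith
  have hα := h.hα
  have hc := h.hc
  have q2 : 4*α^2*c^2*(n:ℝ)*v^2 ≤ 4*α^2*c^2*(n:ℝ)*(((n:ℝ)-1)*S) :=
    mul_le_mul_of_nonneg_left q1 (by positivity)
  have q3 : 4*α^2*c^2*(n:ℝ)*(((n:ℝ)-1)*S) = (2*α*c*((n:ℝ)-1)) * (2*α*(c*(n:ℝ))*S) := by ring
  have hpos : (0:ℝ) ≤ 2*α*(c*(n:ℝ))*S := by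
    have : (0:ℝ) ≤ 2*α*(c*(n:ℝ)) := by positivity
    exact mul_nonneg this hS0
  have q4 : (2*α*c*((n:ℝ)-1)) * (2*α*(c*(n:ℝ))*S) ≤ 1 * (2*α*(c*(n:ℝ))*S) :=
    mul_le_mul_of_nonneg_right h.acn' hpos
  linarith

theorem nash (h : Hyp n α c Q) (g : Fin n → ℝ) (hg : ∑ x, g x = 0)
    (z : Fin n) (hmax : ∀ t, |g t| ≤ g z) :
    2*α^2*c^2*(n:ℝ)^2 * (g z)^4 ≤ (nsq g - nsq (Q *ᵥ g)) * nsq g := by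
  have hz0 : 0 ≤ g z := le_trans (abs_nonneg _) (hmax z)
  have hne : (Finset.univ : Finset (Fin n)).Nonempty := ⟨z, Finset.mem_univ z⟩
  obtain ⟨y, -, hy⟩ := Finset.exists_min_image Finset.univ g hne
  have hnR : (0:ℝ) < n := h.hn0
  have hy0 : g y ≤ 0 := by
    have h1 : Finset.univ.card • g y ≤ ∑ x, g x :=
      Finset.card_nsmul_le_sum Finset.univ g (g y) (fun x _ => hy x (Finset.mem_univ x))
    rw [hg, Finset.card_univ, Fintype.card_fin, nsmul_eq_mul] at h1
    nlinarith
  obtain ⟨m, p, hp0, hpm, hmn, hinj, hadj⟩ := exists_chain h.conn h.symm z y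
  set S := ∑ i ∈ Finset.range m, (g (p i) - g (p (i+1)))^2 with hS
  have hS0 : 0 ≤ S := Finset.sum_nonneg fun i _ => sq_nonneg _
  have h1 : (g z)^2 ≤ ∑ i ∈ Finset.range m,
      |g (p i) - g (p (i+1))| * (|g (p i)| + |g (p (i+1))|) := by
    have htel : ∑ i ∈ Finset.range m,
        (g (p i) * |g (p i)| - g (p (i+1)) * |g (p (i+1))|) = g z * |g z| - g y * |g y| := by
      have := Finset.sum_range_sub' (fun i => g (p i) * |g (p i)|) m
      rw [this, hp0, hpm]
    have hstep : ∀ i ∈ Finset.range m,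
        g (p i) * |g (p i)| - g (p (i+1)) * |g (p (i+1))| ≤
          |g (p i) - g (p (i+1))| * (|g (p i)| + |g (p (i+1))|) :=
      fun i _ => phi_diff _ _
    have hsum := Finset.sum_le_sum hstep
    rw [htel] at hsum
    have e1 : g z * |g z| = (g z)^2 := by rw [abs_of_nonneg hz0]; ring
    have e2 : g y * |g y| ≤ 0 := by
      rw [abs_of_nonpos hy0]; nlinarith
    linarith
  have h2 : ((g z)^2)^2 ≤ S * (∑ i ∈ Finset.range m, (|g (p i)| + |g (p (i+1))|)^2) := by
    have hcs := Finset.sum_mul_sq_le_sq_mul_sq (Finset.range m)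
      (fun i => |g (p i) - g (p (i+1))|) (fun i => |g (p i)| + |g (p (i+1))|)
    have e : ∀ i, |g (p i) - g (p (i+1))|^2 = (g (p i) - g (p (i+1)))^2 := fun i => sq_abs _
    rw [Finset.sum_congr rfl fun i _ => e i] at hcs
    have h1sq := pow_le_pow_left₀ (sq_nonneg (g z)) h1 2
    calc ((g z)^2)^2 ≤ (∑ i ∈ Finset.range m,
          |g (p i) - g (p (i+1))| * (|g (p i)| + |g (p (i+1))|))^2 := by
          exact pow_le_pow_left₀ (sq_nonneg _) h1 2
      _ ≤ S * _ := hcs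
  have h3 : (∑ i ∈ Finset.range m, (|g (p i)| + |g (p (i+1))|)^2) ≤ 4 * nsq g := by
    have hterm : ∀ i ∈ Finset.range m,
        (|g (p i)| + |g (p (i+1))|)^2 ≤ 2*(g (p i))^2 + 2*(g (p (i+1)))^2 := by
      intro i _
      have e1 := sq_abs (g (p i))
      have e2 := sq_abs (g (p (i+1)))
      nlinarith [sq_nonneg (|g (p i)| - |g (p (i+1))|)]
    have hsum := Finset.sum_le_sum hterm
    have hsplit : ∑ i ∈ Finset.range m, (2*(g (p i))^2 + 2*(g (p (i+1)))^2)
        = 2 * (∑ i ∈ Finset.range m, (g (p i))^2)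
          + 2 * (∑ i ∈ Finset.range m, (g (p (i+1)))^2) := by
      rw [Finset.sum_add_distrib, Finset.mul_sum, Finset.mul_sum]
    have hA : ∑ i ∈ Finset.range m, (g (p i))^2 ≤ ∑ i ∈ Finset.range (m+1), (g (p i))^2 :=
      Finset.sum_le_sum_of_subset_of_nonneg
        (Finset.range_subset_range.mpr (Nat.le_succ m)) (fun i _ _ => sq_nonneg _)
    have hB : ∑ i ∈ Finset.range m, (g (p (i+1)))^2 ≤ ∑ i ∈ Finset.range (m+1), (g (p i))^2 := by
      have := Finset.sum_range_succ' (fun i => (g (p i))^2) m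
      nlinarith [sq_nonneg (g (p 0))]
    have hC : ∑ i ∈ Finset.range (m+1), (g (p i))^2 ≤ nsq g := by
      have hinj' : ∀ i ∈ Finset.range (m+1), ∀ j ∈ Finset.range (m+1), p i = p j → i = j := by
        intro i hi j hj hij
        rw [Finset.mem_range] at hi hj
        exact hinj i j (by omega) (by omega) hij
      have himg : ∑ t ∈ (Finset.range (m+1)).image p, (g t)^2
          = ∑ i ∈ Finset.range (m+1), (g (p i))^2 := Finset.sum_image hinj'
      rw [← himg]
      exact Finset.sum_le_sum_of_subset_of_nonneg (Finset.subset_univ _)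
        (fun t _ _ => sq_nonneg _)
    linarith
  have hq : (g z)^4 ≤ 4 * (S * nsq g) := by
    have := mul_le_mul_of_nonneg_left h3 hS0
    calc (g z)^4 = ((g z)^2)^2 := by ring
      _ ≤ S * (∑ i ∈ Finset.range m, (|g (p i)| + |g (p (i+1))|)^2) := h2
      _ ≤ S * (4 * nsq g) := this
      _ = 4 * (S * nsq g) := by ring
  have hPB := pathbound h g p m hinj hadj
  rw [← hS] at hPB
  have hα := h.hα
  have hc := h.hc
  have k1 : 2*α^2*c^2*(n:ℝ)^2*(g z)^4 ≤ 2*α^2*c^2*(n:ℝ)^2*(4*(S * nsq g)) :=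
    mul_le_mul_of_nonneg_left hq (by positivity)
  have k2 : 2*α^2*c^2*(n:ℝ)^2*(4*(S * nsq g)) = (4*(α*(c*(n:ℝ)))) * ((2*α*(c*(n:ℝ))*S) * nsq g) := by
    ring
  have hpos : (0:ℝ) ≤ (2*α*(c*(n:ℝ))*S) * nsq g := by
    have h5 : (0:ℝ) ≤ 2*α*(c*(n:ℝ)) := by positivity
    exact mul_nonneg (mul_nonneg h5 hS0) (nsq_nonneg g)
  have k3 : (4*(α*(c*(n:ℝ)))) * ((2*α*(c*(n:ℝ))*S) * nsq g) ≤ 1 * ((2*α*(c*(n:ℝ))*S) * nsq g) :=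
    mul_le_mul_of_nonneg_right h.acn hpos
  have k4 : (2*α*(c*(n:ℝ))*S) * nsq g ≤ (nsq g - nsq (Q *ᵥ g)) * nsq g :=
    mul_le_mul_of_nonneg_right hPB (nsq_nonneg g)
  linarith

theorem K2 (h : Hyp n α c Q) (g : Fin n → ℝ) (hg : ∑ x, g x = 0) (m : ℕ) (z : Fin n) :
    2*α^2*c^2*(n:ℝ)^2 * (((Q^m) *ᵥ g) z)^4 ≤ (nsq g - nsq (Q *ᵥ g)) * nsq g := by
  have hne : (Finset.univ : Finset (Fin n)).Nonempty := ⟨z, Finset.mem_univ z⟩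
  obtain ⟨z0, -, hz0⟩ := Finset.exists_max_image Finset.univ (fun t => |g t|) hne
  set v := ((Q^m) *ᵥ g) z with hvdef
  have hv : |v| ≤ |g z0| := by
    calc |v| = |∑ t, (Q^m) z t * g t| := rfl
      _ ≤ ∑ t, |(Q^m) z t * g t| := Finset.abs_sum_le_sum_abs _ _
      _ = ∑ t, (Q^m) z t * |g t| := by
          apply Finset.sum_congr rfl
          intro t _
          rw [abs_mul, abs_of_nonneg (pow_nn h m z t)]
      _ ≤ ∑ t, (Q^m) z t * |g z0| := Finset.sum_le_sum fun t _ =>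
          mul_le_mul_of_nonneg_left (hz0 t (Finset.mem_univ t)) (pow_nn h m z t)
      _ = |g z0| := by rw [← Finset.sum_mul, pow_row h.row m z, one_mul]
  have hv4 : v^4 ≤ (g z0)^4 := by
    have h2 : v^2 ≤ (g z0)^2 := by
      have := pow_le_pow_left₀ (abs_nonneg v) hv 2
      rwa [sq_abs, sq_abs] at this
    have h4 : (v^2)^2 ≤ ((g z0)^2)^2 := pow_le_pow_left₀ (sq_nonneg _) h2 2
    calc v^4 = (v^2)^2 := by ring
      _ ≤ ((g z0)^2)^2 := h4
      _ = (g z0)^4 := by ring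
  have hα := h.hα
  have hc := h.hc
  have hnR := h.hn0
  by_cases hsign : 0 ≤ g z0
  · have hmax : ∀ t, |g t| ≤ g z0 := by
      intro t
      calc |g t| ≤ |g z0| := hz0 t (Finset.mem_univ t)
        _ = g z0 := abs_of_nonneg hsign
    have hn := nash h g hg z0 hmax
    have := mul_le_mul_of_nonneg_left hv4 (by positivity : (0:ℝ) ≤ 2*α^2*c^2*(n:ℝ)^2)
    linarith
  · push_neg at hsign
    have hg' : ∑ x, (-g) x = 0 := by
      simp only [Pi.neg_apply]
      rw [Finset.sum_neg_distrib, hg, neg_zero]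
    have hmax' : ∀ t, |(-g) t| ≤ (-g) z0 := by
      intro t
      simp only [Pi.neg_apply, abs_neg]
      calc |g t| ≤ |g z0| := hz0 t (Finset.mem_univ t)
        _ = -(g z0) := abs_of_neg hsign
    have hn := nash h (-g) hg' z0 hmax'
    have e1 : nsq (-g) = nsq g := by
      unfold nsq; apply Finset.sum_congr rfl; intro t _; simp
    have e2 : nsq (Q *ᵥ (-g)) = nsq (Q *ᵥ g) := by
      rw [Matrix.mulVec_neg]
      unfold nsq; apply Finset.sum_congr rfl; intro t _; simp
    have e3 : ((-g) z0)^4 = (g z0)^4 := by simp [Pi.neg_apply]; ring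
    rw [e1, e2, e3] at hn
    have := mul_le_mul_of_nonneg_left hv4 (by positivity : (0:ℝ) ≤ 2*α^2*c^2*(n:ℝ)^2)
    linarith

theorem L2a (h : Hyp n α c Q) (g : Fin n → ℝ) (hg : ∑ x, g x = 0) (k : ℕ) (z : Fin n) :
    4*α^2*c^2*(n:ℝ)*((k:ℝ)+1) * (((Q^k) *ᵥ g) z)^2 ≤ nsq g := by
  have tel : ∑ j ∈ Finset.range (k+1),
      (nsq ((Q^j) *ᵥ g) - nsq ((Q^(j+1)) *ᵥ g)) = nsq g - nsq ((Q^(k+1)) *ᵥ g) := by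
    have := Finset.sum_range_sub' (fun j => nsq ((Q^j) *ᵥ g)) (k+1)
    simpa using this
  have hstep : ∀ j ∈ Finset.range (k+1),
      4*α^2*c^2*(n:ℝ) * (((Q^k) *ᵥ g) z)^2
        ≤ nsq ((Q^j) *ᵥ g) - nsq ((Q^(j+1)) *ᵥ g) := by
    intro j hj
    rw [Finset.mem_range] at hj
    have hgj : ∑ x, ((Q^j) *ᵥ g) x = 0 := by rw [sum_pow_mulVec h]; exact hg
    have ekj : k - j + j = k := by omega
    have e1 : (Q^(k-j)) *ᵥ ((Q^j) *ᵥ g) = (Q^k) *ᵥ g := by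
      rw [Matrix.mulVec_mulVec, ← pow_add, ekj]
    have e2 : (Q^(j+1)) *ᵥ g = Q *ᵥ ((Q^j) *ᵥ g) := by
      rw [Matrix.mulVec_mulVec, ← pow_succ']
    have hk1 := K1 h ((Q^j) *ᵥ g) hgj (k-j) z
    rw [e1] at hk1
    rw [e2]
    exact hk1
  have hsum := Finset.card_nsmul_le_sum (Finset.range (k+1)) _ _ hstep
  rw [Finset.card_range, nsmul_eq_mul, tel] at hsum
  have hnn : 0 ≤ nsq ((Q^(k+1)) *ᵥ g) := nsq_nonneg _
  have e : 4*α^2*c^2*(n:ℝ)*((k:ℝ)+1) * (((Q^k) *ᵥ g) z)^2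
      = ((k:ℝ)+1) * (4*α^2*c^2*(n:ℝ) * (((Q^k) *ᵥ g) z)^2) := by ring
  rw [e]
  push_cast at hsum
  linarith

theorem L2b (h : Hyp n α c Q) (g : Fin n → ℝ) (hg : ∑ x, g x = 0) (k : ℕ) (z : Fin n) :
    2*α^2*c^2*(n:ℝ)^2*((k:ℝ)+1) * (((Q^k) *ᵥ g) z)^4 ≤ (nsq g)^2 := by
  have hstep : ∀ j ∈ Finset.range (k+1),
      2*α^2*c^2*(n:ℝ)^2 * (((Q^k) *ᵥ g) z)^4
        ≤ (nsq ((Q^j) *ᵥ g) - nsq ((Q^(j+1)) *ᵥ g)) * nsq g := by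
    intro j hj
    rw [Finset.mem_range] at hj
    have hgj : ∑ x, ((Q^j) *ᵥ g) x = 0 := by rw [sum_pow_mulVec h]; exact hg
    have ekj : k - j + j = k := by omega
    have e1 : (Q^(k-j)) *ᵥ ((Q^j) *ᵥ g) = (Q^k) *ᵥ g := by
      rw [Matrix.mulVec_mulVec, ← pow_add, ekj]
    have e2 : (Q^(j+1)) *ᵥ g = Q *ᵥ ((Q^j) *ᵥ g) := by
      rw [Matrix.mulVec_mulVec, ← pow_succ']
    have hk2 := K2 h ((Q^j) *ᵥ g) hgj (k-j) z
    rw [e1] at hk2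
    have hD0 : 0 ≤ nsq ((Q^j) *ᵥ g) - nsq (Q *ᵥ ((Q^j) *ᵥ g)) := by
      have := nsq_mulVec_le h ((Q^j) *ᵥ g)
      linarith
    have hmon : (nsq ((Q^j) *ᵥ g) - nsq (Q *ᵥ ((Q^j) *ᵥ g))) * nsq ((Q^j) *ᵥ g)
        ≤ (nsq ((Q^j) *ᵥ g) - nsq (Q *ᵥ ((Q^j) *ᵥ g))) * nsq g :=
      mul_le_mul_of_nonneg_left (nsq_pow_mulVec_le h j g) hD0
    rw [e2]
    linarith
  have hsum := Finset.card_nsmul_le_sum (Finset.range (k+1)) _ _ hstep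
  rw [Finset.card_range, nsmul_eq_mul] at hsum
  have tel : ∑ j ∈ Finset.range (k+1),
      ((nsq ((Q^j) *ᵥ g) - nsq ((Q^(j+1)) *ᵥ g)) * nsq g)
      = (nsq g - nsq ((Q^(k+1)) *ᵥ g)) * nsq g := by
    rw [← Finset.sum_mul]
    congr 1
    have := Finset.sum_range_sub' (fun j => nsq ((Q^j) *ᵥ g)) (k+1)
    simpa using this
  rw [tel] at hsum
  have hnn : 0 ≤ nsq ((Q^(k+1)) *ᵥ g) := nsq_nonneg _
  have hfin : (nsq g - nsq ((Q^(k+1)) *ᵥ g)) * nsq g ≤ (nsq g)^2 := by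
    have := mul_le_mul_of_nonneg_right
      (sub_le_self (nsq g) hnn) (nsq_nonneg g)
    nlinarith [nsq_nonneg g]
  have e : 2*α^2*c^2*(n:ℝ)^2*((k:ℝ)+1) * (((Q^k) *ᵥ g) z)^4
      = ((k:ℝ)+1) * (2*α^2*c^2*(n:ℝ)^2 * (((Q^k) *ᵥ g) z)^4) := by ring
  rw [e]
  push_cast at hsum
  linarith

end Stmt12

set_option maxHeartbeats 2000000 in
open Stmt12 in
/-- Lyons's return-probability estimate: for a lazy, symmetric, stochastic, connected
transition matrix `Q` with self-loop probability at least `α` and minimal off-diagonal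
entry `π(x)Q(x,y) ≥ c` (with uniform stationary distribution `π(x) = 1/n`), for every
vertex `x` and every integer `k ≥ 1`,
`|Q^k(x,x)/π(x) − 1| ≤ min{1/(αc√(k+1)), 1/(2α²c²(k+1))}`. -/
theorem stmt_12 (n : ℕ) (hn : 1 ≤ n) (α c : ℝ) (hα : 0 < α) (hc : 0 < c)
    (Q : Matrix (Fin n) (Fin n) ℝ) (hsymm : Q.IsSymm)
    (hnn : ∀ x y, 0 ≤ Q x y) (hrow : ∀ x, ∑ y, Q x y = 1)
    (hdiag : ∀ x, α ≤ Q x x)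
    (hconn : (SimpleGraph.fromRel fun x y => 0 < Q x y).Connected)
    (hmin : ∀ x y, x ≠ y → 0 < Q x y → c ≤ Q x y / n) :
    ∀ (x : Fin n) (k : ℕ), 1 ≤ k →
      |(n : ℝ) * (Q ^ k) x x - 1|
        ≤ min (1 / (α * c * Real.sqrt ((k : ℝ) + 1)))
              (1 / (2 * α ^ 2 * c ^ 2 * ((k : ℝ) + 1))) := by
  intro x k hk
  have hsym : ∀ u v, Q u v = Q v u := by
    intro u v
    have := congrFun (congrFun hsymm u) v
    rw [Matrix.transpose_apply] at this
    exact this.symm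
  by_cases hn2 : 2 ≤ n
  swap
  · -- n = 1
    have hn1 : n = 1 := by omega
    subst hn1
    have hQ : (Q ^ k) x x = 1 := by
      have hr := pow_row hrow k x
      rw [Fin.sum_univ_one] at hr
      rw [show (0 : Fin 1) = x from Subsingleton.elim _ _] at hr
      exact hr
    rw [hQ]
    norm_num
    constructor
    · positivity
    · positivity
  · -- main case
    have hn0 : (0:ℝ) < n := by positivity
    have hedge : ∀ u v, u ≠ v → 0 < Q u v → c * n ≤ Q u v := by
      intro u v huv hQ
      exact (le_div_iff₀ hn0).mp (hmin u v huv hQ)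
    -- find an edge to bound c*n ≤ 1 - α
    have hcn1 : c * n ≤ 1 - α := by
      have ha : (0:ℕ) < n := by omega
      have hb : (1:ℕ) < n := by omega
      set a : Fin n := ⟨0, ha⟩
      set b : Fin n := ⟨1, hb⟩
      have hab : a ≠ b := by
        intro hcon
        have := congrArg Fin.val hcon
        simp [a, b] at this
      set v0 : Fin n := if x = a then b else a with hv0
      have hxv : x ≠ v0 := by
        rw [hv0]
        split_ifs with hxa
        · rw [hxa]; exact hab
        · exact hxa
      obtain ⟨m, p, hp0, hpm, hmn, hinj, hadj⟩ := exists_chain hconn hsym x v0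
      have hm0 : 0 < m := by
        rcases Nat.eq_zero_or_pos m with hm | hm
        · exfalso; apply hxv; rw [← hp0, ← hpm, hm]
        · exact hm
      obtain ⟨hne01, hQ01⟩ := hadj 0 hm0
      have hcn : c * n ≤ Q (p 0) (p 1) := hedge _ _ hne01 hQ01
      have hpair : Q (p 0) (p 0) + Q (p 0) (p 1) ≤ 1 := by
        have hsub : ({p 0, p 1} : Finset (Fin n)) ⊆ Finset.univ := Finset.subset_univ _
        have hs := Finset.sum_le_sum_of_subset_of_nonneg hsub
          (fun w _ _ => hnn (p 0) w)
        rw [Finset.sum_pair hne01, hrow (p 0)] at hs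
        exact hs
      have := hdiag (p 0)
      linarith
    have h : Hyp n α c Q :=
      ⟨hn2, hα, hc, hsym, hnn, hrow, hdiag, hedge, hconn, hcn1⟩
    -- split k
    set b : ℕ := k / 2 with hbdef
    set a : ℕ := k - k / 2 with hadef
    have hab : a + b = k := by omega
    have hba : b ≤ a ∧ a ≤ b + 1 := by omega
    -- the vector f0
    set f0 : Fin n → ℝ := fun y => (if y = x then (n:ℝ) else 0) - 1 with hf0def
    have hf0 : ∑ y, f0 y = 0 := by
      rw [hf0def]
      rw [Finset.sum_sub_distrib]
      rw [Finset.sum_ite_eq' Finset.univ x (fun _ => (n:ℝ))]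
      simp
    set h0 : Fin n → ℝ := (Q^b) *ᵥ f0 with hh0def
    have hh0 : ∑ y, h0 y = 0 := by rw [hh0def, sum_pow_mulVec h]; exact hf0
    set u : ℝ := ((Q^b) *ᵥ h0) x with hudef
    have hdpf0 : ∀ w : Fin n → ℝ, dp f0 w = (n:ℝ) * w x - ∑ y, w y := by
      intro w
      unfold dp
      rw [hf0def]
      have e : ∀ y, ((if y = x then (n:ℝ) else 0) - 1) * w y
          = (if y = x then (n:ℝ) * w y else 0) - w y := by
        intro y; split <;> simp_all <;> ring
      rw [Finset.sum_congr rfl fun y _ => e y, Finset.sum_sub_distrib,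
        Finset.sum_ite_eq' Finset.univ x (fun y => (n:ℝ) * w y)]
      simp
    have hHu : nsq h0 = (n:ℝ) * u := by
      have e1 : nsq h0 = dp f0 ((Q^b) *ᵥ h0) := by
        rw [nsq_eq_dp]
        have e0 := dp_pow_mulVec_comm h b f0 h0
        rw [← hh0def] at e0
        exact e0
      rw [e1, hdpf0 ((Q^b) *ᵥ h0)]
      have e2 : ∑ y, ((Q^b) *ᵥ h0) y = 0 := by rw [sum_pow_mulVec h]; exact hh0
      rw [e2, sub_zero, ← hudef]
    have hu0 : 0 ≤ u := by
      have h1 : 0 ≤ (n:ℝ) * u := by rw [← hHu]; exact nsq_nonneg h0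
      nlinarith
    -- G1 : 4 α² c² (b+1) * nsq h0 ≤ n
    have hG1 : 4*α^2*c^2*((b:ℝ)+1) * nsq h0 ≤ (n:ℝ) := by
      have l2a := L2a h h0 hh0 b x
      rw [← hudef, hHu] at l2a
      rw [hHu]
      rcases eq_or_lt_of_le hu0 with hu | hu
      · rw [← hu]; simpa using hn0.le
      · have h' : (4*α^2*c^2*((b:ℝ)+1) * ((n:ℝ)*u)) * u ≤ (n:ℝ) * u := by nlinarith
        exact le_of_mul_le_mul_right h' hu
    -- G2 : 2 α² c² (b+1) * (nsq h0)^2 ≤ n^2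
    have hG2 : 2*α^2*c^2*((b:ℝ)+1) * (nsq h0)^2 ≤ (n:ℝ)^2 := by
      have l2b := L2b h h0 hh0 b x
      rw [← hudef, hHu] at l2b
      rw [hHu]
      rcases eq_or_lt_of_le hu0 with hu | hu
      · rw [← hu]; simpa using sq_nonneg (n:ℝ)
      · have h' : (2*α^2*c^2*((b:ℝ)+1) * ((n:ℝ)*u)^2) * u^2 ≤ ((n:ℝ)^2) * u^2 := by
          nlinarith
        exact le_of_mul_le_mul_right h' (by positivity)
    -- D
    set D : ℝ := ((Q^a) *ᵥ h0) x with hDdef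
    have hDval : D = (n:ℝ) * (Q^k) x x - 1 := by
      rw [hDdef, hh0def, Matrix.mulVec_mulVec, ← pow_add, hab]
      have : ((Q^k) *ᵥ f0) x = ∑ y, (Q^k) x y * f0 y := rfl
      rw [this]
      have e : ∀ y, (Q^k) x y * f0 y
          = (if y = x then (Q^k) x y * (n:ℝ) else 0) - (Q^k) x y := by
        intro y; rw [hf0def]; split <;> simp_all <;> ring
      rw [Finset.sum_congr rfl fun y _ => e y, Finset.sum_sub_distrib,
        Finset.sum_ite_eq' Finset.univ x (fun y => (Q^k) x y * (n:ℝ)), pow_row h.row k x]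
      simp [mul_comm]
    -- E2
    have hE2 : 16*α^4*c^4*((a:ℝ)+1)*((b:ℝ)+1)*D^2 ≤ 1 := by
      have l2a := L2a h h0 hh0 a x
      rw [← hDdef] at l2a
      have t1 := mul_le_mul_of_nonneg_left l2a
        (by positivity : (0:ℝ) ≤ 4*α^2*c^2*((b:ℝ)+1))
      have h' : (16*α^4*c^4*((a:ℝ)+1)*((b:ℝ)+1)*D^2) * n ≤ 1 * n := by nlinarith
      exact le_of_mul_le_mul_right h' hn0
    -- E1
    have hE1 : 4*α^4*c^4*((a:ℝ)+1)*((b:ℝ)+1)*D^4 ≤ 1 := by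
      have l2b := L2b h h0 hh0 a x
      rw [← hDdef] at l2b
      have t1 := mul_le_mul_of_nonneg_left l2b
        (by positivity : (0:ℝ) ≤ 2*α^2*c^2*((b:ℝ)+1))
      have h' : (4*α^4*c^4*((a:ℝ)+1)*((b:ℝ)+1)*D^4) * (n:ℝ)^2 ≤ 1 * (n:ℝ)^2 := by nlinarith
      exact le_of_mul_le_mul_right h' (by positivity)
    -- nat inequality
    have hk4 : ((k:ℝ)+1)^2 ≤ 4*((a:ℝ)+1)*((b:ℝ)+1) := by
      obtain ⟨h1, h2⟩ := hba
      have c1 : (b:ℝ) ≤ a := by exact_mod_cast h1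
      have c2 : (a:ℝ) ≤ (b:ℝ) + 1 := by exact_mod_cast h2
      have c3 : (a:ℝ) + (b:ℝ) = k := by exact_mod_cast hab
      nlinarith [mul_nonneg (sub_nonneg.mpr c1) (sub_nonneg.mpr c2)]
    rw [← hDval]
    apply le_min
    · -- bound I
      have hs : α^2*c^2*((k:ℝ)+1)*D^2 ≤ 1 := by
        have key : (α^2*c^2*((k:ℝ)+1)*D^2)^2 ≤ 1 := by
          nlinarith [mul_le_mul_of_nonneg_right hk4
            (by positivity : (0:ℝ) ≤ α^4*c^4*D^4), hE1, sq_nonneg D]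
        nlinarith [sq_nonneg (α^2*c^2*((k:ℝ)+1)*D^2 - 1),
          (by positivity : (0:ℝ) ≤ α^2*c^2*((k:ℝ)+1)*D^2)]
      have hsq : (0:ℝ) < Real.sqrt ((k:ℝ)+1) := Real.sqrt_pos.mpr (by positivity)
      rw [le_div_iff₀ (by positivity : (0:ℝ) < α * c * Real.sqrt ((k:ℝ)+1))]
      have ht2 : (|D| * (α * c * Real.sqrt ((k:ℝ)+1)))^2 ≤ 1 := by
        have e : (|D| * (α * c * Real.sqrt ((k:ℝ)+1)))^2
            = α^2*c^2*((Real.sqrt ((k:ℝ)+1))^2)*D^2 := by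
          rw [mul_pow]
          rw [sq_abs]
          ring
        rw [e, Real.sq_sqrt (by positivity : (0:ℝ) ≤ (k:ℝ)+1)]
        nlinarith [hs]
      nlinarith [ht2, (by positivity : (0:ℝ) ≤ |D| * (α * c * Real.sqrt ((k:ℝ)+1))),
        sq_nonneg (|D| * (α * c * Real.sqrt ((k:ℝ)+1)) - 1)]
    · -- bound II
      rw [le_div_iff₀ (by positivity : (0:ℝ) < 2 * α^2 * c^2 * ((k:ℝ)+1))]
      have ht2 : (|D| * (2 * α^2 * c^2 * ((k:ℝ)+1)))^2 ≤ 1 := by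
        have e : (|D| * (2 * α^2 * c^2 * ((k:ℝ)+1)))^2
            = 4*α^4*c^4*((k:ℝ)+1)^2*D^2 := by
          rw [mul_pow, sq_abs]; ring
        rw [e]
        nlinarith [mul_le_mul_of_nonneg_right hk4
          (by positivity : (0:ℝ) ≤ 4*α^4*c^4*D^2), hE2]
      nlinarith [ht2, (by positivity : (0:ℝ) ≤ |D| * (2 * α^2 * c^2 * ((k:ℝ)+1))),
        sq_nonneg (|D| * (2 * α^2 * c^2 * ((k:ℝ)+1)) - 1)]
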